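/- arXiv:2109.05573 — 3 statements merged into one kernel-verified Lean document; each statement's English description precedes it below -/
import Mathlib

section
/- The cost difference between the schedule (A then B) and the schedule (B then A), where A and B are contiguous blocks of jobs, equals (Σ_{j∈A} w_j)(Σ_{j∈B} P_j) − (Σ_{j∈B} w_j)(Σ_{j∈A} P_j), up to sign. -/
open Finset

/-- The cost difference between schedule (A then B) and schedule (B then A),
where `A = (1,…,k)` and `B = (k+1,…,n)` are contiguous blocks of jobs with fixed
internal order, equals `(Σ_{j∈B} w j)(Σ_{j∈A} P j) − (Σ_{j∈A} w j)(Σ_{j∈B} P j)`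
(i.e. the stated quantity up to sign). -/
theorem stmt_5 (n k : ℕ) (hk : 1 ≤ k) (hkn : k < n) (P w : ℕ → ℝ)
    (hP : ∀ j ∈ Icc 1 n, 0 < P j) (hw : ∀ j ∈ Icc 1 n, 0 < w j) :
    -- cost of A then B minus cost of B then A
    (((∑ i ∈ Icc 1 k, w i * ∑ j ∈ Icc 1 i, P j) +
        ∑ i ∈ Icc (k + 1) n, w i * ((∑ j ∈ Icc 1 k, P j) + ∑ j ∈ Icc (k + 1) i, P j))
      -
    ((∑ i ∈ Icc (k + 1) n, w i * ∑ j ∈ Icc (k + 1) i, P j) +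
        ∑ i ∈ Icc 1 k, w i * ((∑ j ∈ Icc (k + 1) n, P j) + ∑ j ∈ Icc 1 i, P j)))
      =
    (∑ j ∈ Icc (k + 1) n, w j) * (∑ j ∈ Icc 1 k, P j) -
      (∑ j ∈ Icc 1 k, w j) * (∑ j ∈ Icc (k + 1) n, P j) := by
  simp only [mul_add, Finset.sum_add_distrib, Finset.sum_mul]
  ring
end

section
/- In the sequence produced by repeatedly appending, from the chain of maximum ρ-factor, its prefix up to the ρ-determining job, every chain's internal order is preserved: if job i precedes job j within a chain, then i appears before j in the output sequence. -/
/-- One generic run of the resequencing algorithm with `fuel` iterations: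
at each step, the selection function `pick` chooses a chain index and a prefix
length; that prefix is removed from the chain and appended to the output.
(In Algorithm 1, `pick` selects the chain of maximum ρ-factor and the prefix up
to its ρ-determining job.) -/
def runAlg {α : Type*} (pick : List (List α) → ℕ × ℕ) : ℕ → List (List α) → List α
  | 0, _ => []
  | fuel + 1, cs =>
    if cs.all (·.isEmpty) then []
    else
      let im := pick cs
      let c := cs.getD im.1 []
      c.take im.2 ++ runAlg pick fuel (cs.set im.1 (c.drop im.2))

private lemma flatten_set_len {α : Type*} :
    ∀ (cs : List (List α)) (n : ℕ) (x : List α), n < cs.length →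
      ((cs.set n x).flatten.length + (cs.getD n []).length
        = cs.flatten.length + x.length)
  | [], n, x, h => by simp at h
  | a :: t, 0, x, h => by simp; omega
  | a :: t, n + 1, x, h => by
      have := flatten_set_len t n x (by simpa using h)
      simp only [List.set_cons_succ, List.flatten_cons, List.length_append,
        List.getD_cons_succ]
      omega

private lemma key {α : Type*} (pick : List (List α) → ℕ × ℕ)
    (hpick : ∀ cs : List (List α), ¬ cs.all (·.isEmpty) →
      (pick cs).1 < cs.length ∧ 1 ≤ (pick cs).2 ∧
        (pick cs).2 ≤ (cs.getD (pick cs).1 []).length) :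
    ∀ (fuel : ℕ) (cs : List (List α)), cs.flatten.length ≤ fuel →
      ∀ k, k < cs.length → (cs.getD k []).Sublist (runAlg pick fuel cs) := by
  intro fuel
  induction fuel with
  | zero =>
    intro cs hlen k hk
    have : cs.flatten = [] := List.length_eq_zero_iff.mp (Nat.le_zero.mp hlen)
    have hmem : cs.getD k [] ∈ cs := by
      rw [List.getD_eq_getElem cs [] hk]; exact List.getElem_mem hk
    have h0 : cs.getD k [] = [] := List.flatten_eq_nil_iff.mp this _ hmem
    rw [h0]; exact List.nil_sublist _
  | succ n ih =>
    intro cs hlen k hk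
    by_cases hall : cs.all (·.isEmpty)
    · have hmem : cs.getD k [] ∈ cs := by
        rw [List.getD_eq_getElem cs [] hk]; exact List.getElem_mem hk
      have h0 : cs.getD k [] = [] :=
        List.isEmpty_iff.mp (List.all_eq_true.mp hall _ hmem)
      rw [h0]; exact List.nil_sublist _
    · obtain ⟨h1, h2, h3⟩ := hpick cs hall
      simp only [runAlg, if_neg hall]
      set c := cs.getD (pick cs).1 [] with hc
      set cs' := cs.set (pick cs).1 (c.drop (pick cs).2) with hcs'
      have hlen' : cs'.flatten.length ≤ n := by
        have := flatten_set_len cs (pick cs).1 (c.drop (pick cs).2) h1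
        rw [← hc, ← hcs'] at this
        have hd : (c.drop (pick cs).2).length = c.length - (pick cs).2 := by
          simp
        omega
      have hsetlen : cs'.length = cs.length := by simp [hcs']
      by_cases hki : k = (pick cs).1
      · rw [hki, ← hc]
        have hget' : cs'.getD (pick cs).1 [] = c.drop (pick cs).2 := by
          rw [List.getD_eq_getElem cs' [] (by omega)]
          simp [hcs', List.getElem_set_self]
        have hsub := ih cs' hlen' (pick cs).1 (by omega)
        rw [hget'] at hsub
        have h4 : (c.take (pick cs).2 ++ c.drop (pick cs).2).Sublist
            (c.take (pick cs).2 ++ runAlg pick n cs') :=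
          (List.Sublist.refl _).append hsub
        simpa using h4
      · have hget' : cs'.getD k [] = cs.getD k [] := by
          rw [List.getD_eq_getElem cs' [] (by omega),
            List.getD_eq_getElem cs [] hk]
          simp [hcs', List.getElem_set_ne (Ne.symm hki)]
        have hsub := ih cs' hlen' k (by omega)
        rw [hget'] at hsub
        exact hsub.trans (List.sublist_append_right _ _)

/-- In the sequence produced by repeatedly removing a prefix of some chain and
appending it to the output, every chain's internal order is preserved: each
chain occurs as a subsequence of the output, i.e. if job `i` precedes job `j`
within a chain then `i` appears before `j` in the output sequence. -/
theorem stmt_13 {α : Type*} (chains : List (List α))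
    (pick : List (List α) → ℕ × ℕ)
    (hpick : ∀ cs : List (List α), ¬ cs.all (·.isEmpty) →
      (pick cs).1 < cs.length ∧ 1 ≤ (pick cs).2 ∧
        (pick cs).2 ≤ (cs.getD (pick cs).1 []).length) :
    ∀ c ∈ chains, c.Sublist (runAlg pick chains.flatten.length chains) := by
  intro c hc
  obtain ⟨k, hk, rfl⟩ := List.mem_iff_getElem.mp hc
  have := key pick hpick chains.flatten.length chains le_rfl k hk
  rwa [List.getD_eq_getElem chains [] hk] at this
end

section
/- For a chain 1 → ... → k with ρ-factor determined by job a*, splitting the prefix (1,...,a*) by interleaving a block B of jobs from another chain with block ratio ρ_B strictly less than ρ between positions a and a+1 (with 1 ≤ a < a*) yields a total weighted completion time strictly greater than processing the prefix (1,...,a*) contiguously before B. -/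
open Finset

/-- For a chain `1 → ⋯ → k` whose ρ-factor `ρ` is (first) attained at job `a*`,
interleaving a block `B` (jobs `1,…,m` of another chain, with block ratio
strictly less than `ρ`) between positions `a` and `a+1` of the prefix
(with `1 ≤ a < a*`) yields a total weighted completion time strictly greater
than processing the prefix `(1,…,a*)` contiguously before `B`. -/
theorem stmt_14 (k : ℕ) (hk : 1 ≤ k) (P w : ℕ → ℝ)
    (hP : ∀ j ∈ Icc 1 k, 0 < P j) (hw : ∀ j ∈ Icc 1 k, 0 < w j)
    (astar : ℕ) (hmem : astar ∈ Icc 1 k)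
    (hmax : ∀ b ∈ Icc 1 k,
      (∑ j ∈ Icc 1 b, w j) / (∑ j ∈ Icc 1 b, P j) ≤
        (∑ j ∈ Icc 1 astar, w j) / (∑ j ∈ Icc 1 astar, P j))
    (hleast : ∀ b ∈ Icc 1 k,
      (∑ j ∈ Icc 1 b, w j) / (∑ j ∈ Icc 1 b, P j) =
        (∑ j ∈ Icc 1 astar, w j) / (∑ j ∈ Icc 1 astar, P j) → astar ≤ b)
    (m : ℕ) (hm : 1 ≤ m) (P' w' : ℕ → ℝ)
    (hP' : ∀ j ∈ Icc 1 m, 0 < P' j) (hw' : ∀ j ∈ Icc 1 m, 0 < w' j)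
    (hB : (∑ j ∈ Icc 1 m, w' j) / (∑ j ∈ Icc 1 m, P' j) <
      (∑ j ∈ Icc 1 astar, w j) / (∑ j ∈ Icc 1 astar, P j))
    (a : ℕ) (ha : 1 ≤ a) (haa : a < astar) :
    -- cost of the contiguous schedule (1,…,a*), then B
    ((∑ i ∈ Icc 1 astar, w i * ∑ j ∈ Icc 1 i, P j) +
        ∑ i ∈ Icc 1 m, w' i * ((∑ j ∈ Icc 1 astar, P j) + ∑ j ∈ Icc 1 i, P' j))
      <
    -- cost of the interleaved schedule (1,…,a), B, (a+1,…,a*)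
    ((∑ i ∈ Icc 1 a, w i * ∑ j ∈ Icc 1 i, P j) +
        (∑ i ∈ Icc 1 m, w' i * ((∑ j ∈ Icc 1 a, P j) + ∑ j ∈ Icc 1 i, P' j)) +
        ∑ i ∈ Icc (a + 1) astar, w i * ((∑ j ∈ Icc 1 m, P' j) + ∑ j ∈ Icc 1 i, P j)) := by
  simp only [mem_Icc] at hmem
  obtain ⟨h1, h2⟩ := hmem
  -- split lemma
  have hsplit : ∀ f : ℕ → ℝ, ∑ j ∈ Icc 1 astar, f j
      = (∑ j ∈ Icc 1 a, f j) + ∑ j ∈ Icc (a + 1) astar, f j := by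
    intro f
    have e : ∀ b : ℕ, Icc 1 b = Ioc 0 b := fun b => by rw [← Finset.Icc_add_one_left_eq_Ioc]; rfl
    rw [e, e, Finset.Icc_add_one_left_eq_Ioc,
      ← Finset.sum_Ioc_consecutive f (Nat.zero_le a) (le_of_lt haa)]
  have hne : ∀ b : ℕ, 1 ≤ b → (Icc 1 b).Nonempty :=
    fun b hb => ⟨1, by simp [mem_Icc, hb]⟩
  have hPp : 0 < ∑ j ∈ Icc 1 a, P j :=
    Finset.sum_pos (fun j hj => hP j (by simp only [mem_Icc] at hj ⊢; omega)) (hne a ha)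
  have hPm : 0 < ∑ j ∈ Icc (a + 1) astar, P j :=
    Finset.sum_pos (fun j hj => hP j (by simp only [mem_Icc] at hj ⊢; omega))
      ⟨a + 1, by simp only [mem_Icc]; omega⟩
  have hWm : 0 < ∑ j ∈ Icc (a + 1) astar, w j :=
    Finset.sum_pos (fun j hj => hw j (by simp only [mem_Icc] at hj ⊢; omega))
      ⟨a + 1, by simp only [mem_Icc]; omega⟩
  have hPB : 0 < ∑ j ∈ Icc 1 m, P' j :=
    Finset.sum_pos (fun j hj => hP' j hj) (hne m hm)
  set Wp := ∑ j ∈ Icc 1 a, w j with hWp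
  set Pp := ∑ j ∈ Icc 1 a, P j with hPpd
  set Wm := ∑ j ∈ Icc (a + 1) astar, w j with hWmd
  set Pm := ∑ j ∈ Icc (a + 1) astar, P j with hPmd
  set WB := ∑ j ∈ Icc 1 m, w' j with hWBd
  set PB := ∑ j ∈ Icc 1 m, P' j with hPBd
  have hPs : 0 < Pp + Pm := by linarith
  rw [hsplit w, hsplit P] at hB hmax
  have hρa := hmax a (by simp only [mem_Icc]; omega)
  have h1' : Wp * (Pp + Pm) ≤ (Wp + Wm) * Pp := (div_le_div_iff₀ hPp hPs).mp hρa
  have hmed : (Wp + Wm) / (Pp + Pm) ≤ Wm / Pm := by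
    rw [div_le_div_iff₀ hPs hPm]; nlinarith [h1']
  have hkey : WB * Pm < Wm * PB :=
    (div_lt_div_iff₀ hPB hPm).mp (lt_of_lt_of_le hB hmed)
  -- rewrite the three sums
  have e1 : ∑ i ∈ Icc 1 astar, w i * ∑ j ∈ Icc 1 i, P j
      = (∑ i ∈ Icc 1 a, w i * ∑ j ∈ Icc 1 i, P j)
        + ∑ i ∈ Icc (a + 1) astar, w i * ∑ j ∈ Icc 1 i, P j :=
    hsplit _
  have e2 : ∑ i ∈ Icc 1 m, w' i * ((∑ j ∈ Icc 1 astar, P j) + ∑ j ∈ Icc 1 i, P' j)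
      = (∑ i ∈ Icc 1 m, w' i * (Pp + ∑ j ∈ Icc 1 i, P' j)) + WB * Pm := by
    rw [hsplit P, Finset.sum_mul]
    rw [← Finset.sum_add_distrib]
    exact Finset.sum_congr rfl fun i _ => by ring
  have e3 : ∑ i ∈ Icc (a + 1) astar, w i * (PB + ∑ j ∈ Icc 1 i, P j)
      = (∑ i ∈ Icc (a + 1) astar, w i * ∑ j ∈ Icc 1 i, P j) + Wm * PB := by
    rw [Finset.sum_mul, ← Finset.sum_add_distrib]
    exact Finset.sum_congr rfl fun i _ => by ring
  rw [e1, e2, e3]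
  linarith [hkey]
end
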